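/- Let C ⊆ (Z/qZ)^n be a code with minimum distance at least d (under a translation-invariant semimetric), and let f : (Z/qZ)^n → ℝ satisfy: f(x) ≤ 0 whenever d(x,0) ≥ d and x ≠ 0; the Fourier transform f̂(ω) = Σ_x f(x) e^{2πi⟨ω,x⟩/q} is nonnegative for all ω; and f̂(0) > 0. Then |C| ≤ q^n · f(0)/f̂(0). -/
import Mathlib


open Finset

/-- Fourier transform on `(ZMod q)^n`: `f̂(ω) = Σ_x f(x) e^{2πi⟨ω,x⟩/q}`. -/
noncomputable def ft {q n : ℕ} [NeZero q] (f : (Fin n → ZMod q) → ℝ) (ω : Fin n → ZMod q) : ℂ :=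
  ∑ x : Fin n → ZMod q, (f x : ℂ) *
    Complex.exp (2 * Real.pi * Complex.I * (((∑ i, ω i * x i : ZMod q)).val : ℂ) / q)

private lemma addchar_map_sum {A M : Type*} [AddCommMonoid A] [CommMonoid M] (ψ : AddChar A M)
    {ι : Type*} (s : Finset ι) (g : ι → A) : ψ (∑ i ∈ s, g i) = ∏ i ∈ s, ψ (g i) := by
  induction s using Finset.cons_induction with
  | empty => simp
  | cons a s ha ih => rw [Finset.sum_cons, Finset.prod_cons, AddChar.map_add_eq_mul, ih]

set_option maxHeartbeats 1000000 in
theorem stmt7 (q n d : ℕ) [NeZero q]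
    (w : (Fin n → ZMod q) → ℕ∞) (hw : ∀ x, w x = 0 ↔ x = 0)
    (f : (Fin n → ZMod q) → ℝ)
    (hf : ∀ x, x ≠ 0 → (d : ℕ∞) ≤ w x → f x ≤ 0)
    (hft : ∀ ω, (ft f ω).im = 0 ∧ 0 ≤ (ft f ω).re)
    (hft0 : 0 < (ft f 0).re)
    (C : Finset (Fin n → ZMod q)) (hCne : C.Nonempty)
    (hC : ∀ x ∈ C, ∀ y ∈ C, x ≠ y → (d : ℕ∞) ≤ w (x - y)) :
    (C.card : ℝ) ≤ (q : ℝ) ^ n * f 0 / (ft f 0).re := by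
  classical
  set ψ : AddChar (ZMod q) ℂ := ZMod.stdAddChar with hψ
  set B : (Fin n → ZMod q) → (Fin n → ZMod q) → ZMod q := fun ω x => ∑ i, ω i * x i with hB
  -- ft in terms of ψ
  have hft_eq : ∀ ω, ft f ω = ∑ x, (f x : ℂ) * ψ (B ω x) := by
    intro ω
    unfold ft
    refine Finset.sum_congr rfl fun x _ => ?_
    rw [hψ, ZMod.stdAddChar_apply, ZMod.toCircle_apply]
  -- orthogonality
  have h1 : ∀ t : ZMod q, ∑ i : ZMod q, ψ (t * i) = if t = 0 then (q : ℂ) else 0 := by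
    intro t
    split_ifs with h
    · simp [h, ZMod.card]
    · exact AddChar.sum_eq_zero_of_ne_one (ZMod.isPrimitive_stdAddChar q h)
  have horth : ∀ z : Fin n → ZMod q, ∑ ω : Fin n → ZMod q, ψ (B ω z)
      = if z = 0 then (q : ℂ) ^ n else 0 := by
    intro z
    have hadd : ∀ ω ω' : Fin n → ZMod q, B (ω + ω') z = B ω z + B ω' z := by
      intro ω ω'
      simp only [hB, Pi.add_apply, add_mul]
      rw [Finset.sum_add_distrib]
    have hzero : B 0 z = 0 := by simp [hB]
    let Ψ : AddChar (Fin n → ZMod q) ℂ :=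
      { toFun := fun ω => ψ (B ω z)
        map_zero_eq_one' := by
          show ψ (B 0 z) = 1
          rw [hzero, AddChar.map_zero_eq_one]
        map_add_eq_mul' := by
          intro a b
          show ψ (B (a + b) z) = ψ (B a z) * ψ (B b z)
          rw [hadd, AddChar.map_add_eq_mul] }
    have hΨap : ∀ ω, ψ (B ω z) = Ψ ω := fun _ => rfl
    rw [Finset.sum_congr rfl fun ω _ => hΨap ω]
    by_cases hz : z = 0
    · rw [if_pos hz]
      have : ∀ ω : Fin n → ZMod q, Ψ ω = 1 := by
        intro ω
        show ψ (B ω z) = 1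
        have : B ω z = 0 := by simp [hB, hz]
        rw [this, AddChar.map_zero_eq_one]
      rw [Finset.sum_congr rfl fun ω _ => this ω, Finset.sum_const, Finset.card_univ]
      simp [ZMod.card]
    · rw [if_neg hz]
      obtain ⟨i, hi⟩ : ∃ i, z i ≠ 0 := by
        by_contra hcon; push_neg at hcon; exact hz (funext hcon)
      have hBsingle : B (Pi.single i 1) z = z i := by
        simp only [hB]
        rw [Finset.sum_eq_single i]
        · simp
        · intro b _ hb; simp [Pi.single_apply, hb]
        · intro h; exact absurd (Finset.mem_univ _) h
      have hΨ : Ψ ≠ 1 := by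
        intro hcon
        have h1' : Ψ (Pi.single i 1) = 1 := by rw [hcon]; rfl
        have h2' : ψ (z i) = 1 := by rw [← hBsingle]; exact h1'
        have h3' : ψ (z i) = ψ 0 := by rw [h2', AddChar.map_zero_eq_one]
        exact hi (ZMod.injective_stdAddChar h3')
      exact AddChar.sum_eq_zero_of_ne_one hΨ
  have hconj : ∀ a : ZMod q, (starRingEnd ℂ) (ψ a) = ψ (-a) := by
    intro a
    rw [hψ, ZMod.stdAddChar_apply, ZMod.stdAddChar_apply, ← Circle.coe_inv_eq_conj,
      ← AddChar.map_neg_eq_inv]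
  set S : (Fin n → ZMod q) → ℂ := fun ω => ∑ c ∈ C, ψ (B ω c) with hS
  -- the key identity
  have hBlin : ∀ ω x c c', B ω (x + c - c') = B ω x + B ω c - B ω c' := by
    intro ω x c c'
    simp only [hB, Pi.add_apply, Pi.sub_apply, mul_add, mul_sub]
    rw [Finset.sum_sub_distrib, Finset.sum_add_distrib]
  have key : ∑ ω : Fin n → ZMod q, ft f ω * (S ω * (starRingEnd ℂ) (S ω))
      = (q : ℂ) ^ n * ∑ c ∈ C, ∑ c' ∈ C, (f (c' - c) : ℂ) := by
    have expand : ∀ ω : Fin n → ZMod q, ft f ω * (S ω * (starRingEnd ℂ) (S ω))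
        = ∑ x : Fin n → ZMod q, ∑ c ∈ C, ∑ c' ∈ C, (f x : ℂ) * ψ (B ω (x + c - c')) := by
      intro ω
      rw [hft_eq, hS, map_sum, Finset.sum_mul_sum, Finset.sum_mul_sum]
      refine Finset.sum_congr rfl fun x _ => ?_
      refine Finset.sum_congr rfl fun c _ => ?_
      rw [Finset.mul_sum]
      refine Finset.sum_congr rfl fun c' _ => ?_
      rw [hconj, hBlin, sub_eq_add_neg, AddChar.map_add_eq_mul, AddChar.map_add_eq_mul]
      ring
    calc ∑ ω : Fin n → ZMod q, ft f ω * (S ω * (starRingEnd ℂ) (S ω))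
        = ∑ ω : Fin n → ZMod q, ∑ x : Fin n → ZMod q, ∑ c ∈ C, ∑ c' ∈ C,
            (f x : ℂ) * ψ (B ω (x + c - c')) := Finset.sum_congr rfl fun ω _ => expand ω
      _ = ∑ x : Fin n → ZMod q, ∑ c ∈ C, ∑ c' ∈ C,
            (f x : ℂ) * ∑ ω : Fin n → ZMod q, ψ (B ω (x + c - c')) := by
          rw [Finset.sum_comm]
          refine Finset.sum_congr rfl fun x _ => ?_
          rw [Finset.sum_comm]
          refine Finset.sum_congr rfl fun c _ => ?_
          rw [Finset.sum_comm]
          refine Finset.sum_congr rfl fun c' _ => ?_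
          rw [Finset.mul_sum]
      _ = ∑ x : Fin n → ZMod q, ∑ c ∈ C, ∑ c' ∈ C,
            (f x : ℂ) * (if x = c' - c then (q : ℂ) ^ n else 0) := by
          refine Finset.sum_congr rfl fun x _ => Finset.sum_congr rfl fun c _ =>
            Finset.sum_congr rfl fun c' _ => ?_
          rw [horth]
          congr 1
          simp [sub_eq_zero, eq_sub_iff_add_eq]
      _ = ∑ c ∈ C, ∑ c' ∈ C, ∑ x : Fin n → ZMod q,
            (f x : ℂ) * (if x = c' - c then (q : ℂ) ^ n else 0) := by
          rw [Finset.sum_comm]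
          exact Finset.sum_congr rfl fun c _ => Finset.sum_comm
      _ = (q : ℂ) ^ n * ∑ c ∈ C, ∑ c' ∈ C, (f (c' - c) : ℂ) := by
          rw [Finset.mul_sum]
          refine Finset.sum_congr rfl fun c _ => ?_
          rw [Finset.mul_sum]
          refine Finset.sum_congr rfl fun c' _ => ?_
          rw [Finset.sum_eq_single (c' - c)]
          · rw [if_pos rfl]; ring
          · intro b _ hb; rw [if_neg hb, mul_zero]
          · intro h; exact absurd (Finset.mem_univ _) h
  -- realify
  have hterm : ∀ ω, ft f ω * (S ω * (starRingEnd ℂ) (S ω))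
      = (((ft f ω).re * Complex.normSq (S ω) : ℝ) : ℂ) := by
    intro ω
    have hr : ft f ω = ((ft f ω).re : ℂ) := by
      rw [Complex.ext_iff]
      simp [(hft ω).1]
    rw [Complex.mul_conj]
    conv_lhs => rw [hr]
    push_cast
    ring
  have keyR : ∑ ω : Fin n → ZMod q, (ft f ω).re * Complex.normSq (S ω)
      = (q : ℝ) ^ n * ∑ c ∈ C, ∑ c' ∈ C, f (c' - c) := by
    have := key
    rw [Finset.sum_congr rfl (fun ω _ => hterm ω)] at this
    rw [← Complex.ofReal_sum] at this
    have h2 : ((q : ℂ) ^ n * ∑ c ∈ C, ∑ c' ∈ C, (f (c' - c) : ℂ))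
        = (((q : ℝ) ^ n * ∑ c ∈ C, ∑ c' ∈ C, f (c' - c) : ℝ) : ℂ) := by
      push_cast
      ring
    rw [h2] at this
    exact_mod_cast this
  -- lower bound on LHS of keyR
  have hS0 : S 0 = (C.card : ℂ) := by
    rw [hS]
    simp only
    have : ∀ c ∈ C, ψ (B 0 c) = 1 := by
      intro c _
      have : B 0 c = 0 := by simp [hB]
      rw [this, AddChar.map_zero_eq_one]
    rw [Finset.sum_congr rfl this, Finset.sum_const, nsmul_eq_mul, mul_one]
  have hlow : (ft f 0).re * (C.card : ℝ) ^ 2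
      ≤ ∑ ω : Fin n → ZMod q, (ft f ω).re * Complex.normSq (S ω) := by
    have h0 : (ft f 0).re * Complex.normSq (S 0) = (ft f 0).re * (C.card : ℝ) ^ 2 := by
      rw [hS0]
      have hc : ((C.card : ℕ) : ℂ) = ((C.card : ℝ) : ℂ) := by push_cast; rfl
      rw [hc, Complex.normSq_ofReal]
      ring
    rw [← h0]
    refine Finset.single_le_sum (f := fun ω => (ft f ω).re * Complex.normSq (S ω))
      (fun ω _ => mul_nonneg (hft ω).2 (Complex.normSq_nonneg _)) (Finset.mem_univ 0)
  -- upper bound on RHS of keyR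
  have hrow : ∀ c ∈ C, ∑ c' ∈ C, f (c' - c) ≤ f 0 := by
    intro c hc
    rw [← Finset.add_sum_erase C _ hc, sub_self]
    have : ∑ c' ∈ C.erase c, f (c' - c) ≤ 0 := by
      refine Finset.sum_nonpos fun c' hc' => ?_
      have hne : c' ≠ c := Finset.ne_of_mem_erase hc'
      have hc'C : c' ∈ C := Finset.mem_of_mem_erase hc'
      exact hf _ (sub_ne_zero.mpr hne) (hC c' hc'C c hc hne)
    linarith
  have hup : ∑ c ∈ C, ∑ c' ∈ C, f (c' - c) ≤ (C.card : ℝ) * f 0 := by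
    calc ∑ c ∈ C, ∑ c' ∈ C, f (c' - c) ≤ ∑ c ∈ C, f 0 := Finset.sum_le_sum hrow
      _ = (C.card : ℝ) * f 0 := by rw [Finset.sum_const, nsmul_eq_mul]
  -- combine
  have hqn : (0 : ℝ) ≤ (q : ℝ) ^ n := by positivity
  have hcard : (0 : ℝ) < (C.card : ℝ) := by
    exact_mod_cast Finset.card_pos.mpr hCne
  have hmain : (ft f 0).re * (C.card : ℝ) ^ 2 ≤ (q : ℝ) ^ n * ((C.card : ℝ) * f 0) := by
    calc (ft f 0).re * (C.card : ℝ) ^ 2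
        ≤ ∑ ω : Fin n → ZMod q, (ft f ω).re * Complex.normSq (S ω) := hlow
      _ = (q : ℝ) ^ n * ∑ c ∈ C, ∑ c' ∈ C, f (c' - c) := keyR
      _ ≤ (q : ℝ) ^ n * ((C.card : ℝ) * f 0) := by
          exact mul_le_mul_of_nonneg_left hup hqn
  rw [le_div_iff₀ hft0]
  nlinarith [sq_nonneg ((C.card : ℝ))]
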